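/- The base packing value equals the strength and the base covering value equals the fractional arboricity: τ(M) = S(M) and υ(M) = D(M). -/

import Mathlib

open Set Matroid

/-- The rank of a set in a matroid: the maximum cardinality of an independent subset. -/
noncomputable def Matroid.rk' {α : Type*} (M : Matroid α) (X : Set α) : ℕ :=
  sSup {n : ℕ | ∃ I, I ⊆ X ∧ M.Indep I ∧ n = Nat.card I}

/-- A matroid is loopless if every singleton of the ground set is independent. -/
def Matroid.Loopless' {α : Type*} (M : Matroid α) : Prop := ∀ e ∈ M.E, M.Indep {e}

/-- The strength `S(M) = min{ |X| / (r(E) − r(E−X)) : X ⊆ E, r(E) > r(E−X) }`. -/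
noncomputable def Matroid.strength {α : Type*} (M : Matroid α) : ℝ :=
  sInf {s : ℝ | ∃ X, X ⊆ M.E ∧ M.rk' (M.E \ X) < M.rk' M.E ∧
    s = (Nat.card X : ℝ) / ((M.rk' M.E : ℝ) - (M.rk' (M.E \ X) : ℝ))}

/-- The fractional arboricity `D(M) = max{ |X| / r(X) : X ⊆ E, r(X) > 0 }`. -/
noncomputable def Matroid.arboricity {α : Type*} (M : Matroid α) : ℝ :=
  sSup {s : ℝ | ∃ X, X ⊆ M.E ∧ 0 < M.rk' X ∧ s = (Nat.card X : ℝ) / (M.rk' X : ℝ)}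

/-- The base packing value `τ(M)`. -/
noncomputable def Matroid.packingValue {α : Type*} [Fintype α] (M : Matroid α) : ℝ :=
  sSup {t : ℝ | ∃ lam : Set α → ℝ, (∀ B, 0 ≤ lam B) ∧ (∀ B, ¬ M.IsBase B → lam B = 0) ∧
    (∀ e ∈ M.E, (∑ B : Set α, B.indicator (fun _ ↦ lam B) e) ≤ 1) ∧
    t = ∑ B : Set α, lam B}

/-- The base covering value `υ(M)`. -/
noncomputable def Matroid.coveringValue {α : Type*} [Fintype α] (M : Matroid α) : ℝ :=
  sInf {t : ℝ | ∃ kap : Set α → ℝ, (∀ B, 0 ≤ kap B) ∧ (∀ B, ¬ M.IsBase B → kap B = 0) ∧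
    (∀ e ∈ M.E, 1 ≤ (∑ B : Set α, B.indicator (fun _ ↦ kap B) e)) ∧
    t = ∑ B : Set α, kap B}


section rkbasics
variable {α : Type*} [Fintype α] {M : Matroid α} {I J X Y B : Set α}

lemma rk'_bddAbove (M : Matroid α) (X : Set α) :
    BddAbove {n : ℕ | ∃ I, I ⊆ X ∧ M.Indep I ∧ n = Nat.card I} := by
  refine ⟨Fintype.card α, ?_⟩
  rintro n ⟨J, hJX, hJ, rfl⟩
  rw [Nat.card_coe_set_eq]
  calc J.ncard ≤ (univ : Set α).ncard := ncard_le_ncard (subset_univ J) (toFinite _)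
  _ = Fintype.card α := by rw [ncard_univ, Nat.card_eq_fintype_card]

lemma indep_le_rk' (hJ : M.Indep J) (hJX : J ⊆ X) : J.ncard ≤ M.rk' X :=
  le_csSup (rk'_bddAbove M X) ⟨J, hJX, hJ, (Nat.card_coe_set_eq J).symm⟩

lemma rk'_eq_of_basis' (h : M.IsBasis' I X) : M.rk' X = I.ncard := by
  refine le_antisymm (csSup_le ⟨I.ncard, I, h.subset, h.indep, (Nat.card_coe_set_eq I).symm⟩ ?_)
    (indep_le_rk' h.indep h.subset)
  rintro n ⟨J, hJX, hJ, rfl⟩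
  obtain ⟨K, hK, hJK⟩ := hJ.subset_isBasis'_of_subset hJX
  rw [Nat.card_coe_set_eq]
  calc J.ncard ≤ K.ncard := ncard_le_ncard hJK (toFinite _)
  _ = I.ncard := by
      have h2 := hK.encard_eq_encard h
      rw [Set.ncard_def, h2, ← Set.ncard_def]

lemma exists_basis'_rk' (M : Matroid α) (X : Set α) : ∃ I, M.IsBasis' I X ∧ M.rk' X = I.ncard := by
  obtain ⟨I, hI⟩ := M.exists_isBasis' X
  exact ⟨I, hI, rk'_eq_of_basis' hI⟩

lemma rk'_mono (h : X ⊆ Y) : M.rk' X ≤ M.rk' Y := by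
  obtain ⟨I, hI, hrk⟩ := exists_basis'_rk' M X
  rw [hrk]
  exact indep_le_rk' hI.indep (hI.subset.trans h)

lemma rk'_le_ncard (M : Matroid α) (X : Set α) : M.rk' X ≤ X.ncard := by
  obtain ⟨I, hI, hrk⟩ := exists_basis'_rk' M X
  rw [hrk]
  exact ncard_le_ncard hI.subset (toFinite _)

lemma rk'_empty (M : Matroid α) : M.rk' (∅ : Set α) = 0 :=
  Nat.le_zero.mp ((rk'_le_ncard M ∅).trans_eq (by simp))

lemma indep_of_ncard_le_rk' (h : X.ncard ≤ M.rk' X) : M.Indep X := by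
  obtain ⟨I, hI, hrk⟩ := exists_basis'_rk' M X
  have : I = X := Set.eq_of_subset_of_ncard_le hI.subset (by omega) (toFinite _)
  exact this ▸ hI.indep

lemma rk'_submod (M : Matroid α) (X Y : Set α) :
    M.rk' (X ∪ Y) + M.rk' (X ∩ Y) ≤ M.rk' X + M.rk' Y := by
  obtain ⟨I, hI⟩ := M.exists_isBasis' (X ∩ Y)
  obtain ⟨J, hJ, hIJ⟩ := hI.indep.subset_isBasis'_of_subset
    (hI.subset.trans (inter_subset_left.trans subset_union_left))
  rw [rk'_eq_of_basis' hJ, rk'_eq_of_basis' hI]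
  have h1 : (J ∩ X).ncard ≤ M.rk' X :=
    indep_le_rk' (hJ.indep.subset inter_subset_left) inter_subset_right
  have h2 : (J ∩ Y).ncard ≤ M.rk' Y :=
    indep_le_rk' (hJ.indep.subset inter_subset_left) inter_subset_right
  have hU : (J ∩ X) ∪ (J ∩ Y) = J := by
    rw [← inter_union_distrib_left, inter_eq_left]; exact hJ.subset
  have hInt : (J ∩ X) ∩ (J ∩ Y) = I := by
    rw [inter_inter_inter_comm, inter_self]
    exact hI.inter_eq_of_subset_indep hIJ hJ.indep
  have := Set.ncard_union_add_ncard_inter (J ∩ X) (J ∩ Y) (toFinite _) (toFinite _)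
  rw [hU, hInt] at this
  omega

lemma base_ncard (hB : M.IsBase B) : M.rk' M.E = B.ncard :=
  rk'_eq_of_basis' hB.isBasis_ground.isBasis'

lemma base_of_indep_rk' (hI : M.Indep I) (h : M.rk' M.E ≤ I.ncard) : M.IsBase I := by
  obtain ⟨B, hB, hIB⟩ := hI.exists_isBase_superset
  have : I = B := Set.eq_of_subset_of_ncard_le hIB (by
    rw [← base_ncard hB] at *; omega) (toFinite _)
  exact this ▸ hB

lemma base_inter_ncard (hB : M.IsBase B) (X : Set α) :
    M.rk' M.E ≤ M.rk' (M.E \ X) + (B ∩ X).ncard := by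
  have h1 : (B \ X).ncard ≤ M.rk' (M.E \ X) :=
    indep_le_rk' (hB.indep.subset diff_subset)
      (diff_subset_diff_left hB.subset_ground)
  have h2 := Set.ncard_inter_add_ncard_diff_eq_ncard B X (toFinite _)
  rw [base_ncard hB]
  omega
end rkbasics

section dual
variable {α β : Type*} [Fintype α] [Fintype β] {M : Matroid α} {X : Set α}

lemma rk'_dual (hX : X ⊆ M.E) :
    M✶.rk' X + M.rk' M.E = X.ncard + M.rk' (M.E \ X) := by
  apply le_antisymm
  · obtain ⟨I, hI⟩ := M✶.exists_isBasis' X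
    rw [rk'_eq_of_basis' hI]
    have hco : M.Coindep I := Matroid.coindep_def.mpr hI.indep
    obtain ⟨B, hB, hBI⟩ := hco.exists_isBase_subset_compl
    have h1 : (B \ X).ncard ≤ M.rk' (M.E \ X) :=
      indep_le_rk' (hB.indep.subset diff_subset) (diff_subset_diff_left hB.subset_ground)
    have h2 : (B ∩ X).ncard ≤ (X \ I).ncard := by
      refine ncard_le_ncard (fun x hx => ⟨hx.2, fun hxI => ?_⟩) (toFinite _)
      exact (hBI hx.1).2 hxI
    have h3 : (X \ I).ncard + I.ncard = X.ncard :=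
      ncard_diff_add_ncard_of_subset hI.subset (toFinite _)
    have h4 := Set.ncard_inter_add_ncard_diff_eq_ncard B X (toFinite _)
    rw [← base_ncard hB] at h4
    omega
  · obtain ⟨J, hJ⟩ := M.exists_isBasis (M.E \ X) diff_subset
    obtain ⟨B, hB, hJB⟩ := hJ.exists_isBase
    have hXB : M✶.Indep (X \ B) := by
      rw [Matroid.dual_indep_iff_exists (diff_subset.trans hX)]
      exact ⟨B, hB, disjoint_sdiff_left⟩
    have h1 : (X \ B).ncard ≤ M✶.rk' X := indep_le_rk' hXB diff_subset
    have h2 : (X \ B).ncard + (X ∩ B).ncard = X.ncard := by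
      have := Set.ncard_inter_add_ncard_diff_eq_ncard X B (toFinite _)
      omega
    have hBd : B \ X = J := by
      rw [hJB]
      ext x
      constructor
      · rintro ⟨hxB, hxX⟩; exact ⟨hxB, hB.subset_ground hxB, hxX⟩
      · rintro ⟨hxB, _, hxX⟩; exact ⟨hxB, hxX⟩
    have h3 : (B ∩ X).ncard + (B \ X).ncard = B.ncard :=
      Set.ncard_inter_add_ncard_diff_eq_ncard B X (toFinite _)
    have h4 : M.rk' (M.E \ X) = J.ncard := rk'_eq_of_basis' hJ.isBasis'
    have h5 : M.rk' M.E = B.ncard := base_ncard hB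
    have h6 : (X ∩ B).ncard = (B ∩ X).ncard := by rw [inter_comm]
    have h7 : (B \ X).ncard = J.ncard := by rw [hBd]
    omega

lemma rk'_comap (N : Matroid β) (f : α → β) (Y : Set α) :
    (N.comap f).rk' Y = N.rk' (f '' Y) := by
  apply le_antisymm
  · obtain ⟨I, hI⟩ := (N.comap f).exists_isBasis' Y
    rw [rk'_eq_of_basis' hI]
    obtain ⟨hind, hinj⟩ := Matroid.comap_indep_iff.mp hI.indep
    rw [← ncard_image_of_injOn hinj]
    exact indep_le_rk' hind (image_mono (f := f) hI.subset)
  · obtain ⟨J, hJ⟩ := N.exists_isBasis' (f '' Y)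
    rw [rk'_eq_of_basis' hJ]
    obtain ⟨I, hIsub, hbij⟩ := Set.exists_subset_bijOn (Y ∩ f ⁻¹' J) f
    have himg : f '' (Y ∩ f ⁻¹' J) = J := by
      apply le_antisymm
      · rintro b ⟨a, ⟨_, ha⟩, rfl⟩; exact ha
      · rintro b hb
        obtain ⟨a, haY, rfl⟩ := hJ.subset hb
        exact ⟨a, ⟨haY, hb⟩, rfl⟩
    rw [himg] at hbij
    have hIY : I ⊆ Y := hIsub.trans inter_subset_left
    have hind : (N.comap f).Indep I := Matroid.comap_indep_iff.mpr
      ⟨hbij.image_eq ▸ hJ.indep, hbij.injOn⟩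
    have : I.ncard = J.ncard := by rw [← hbij.image_eq, ncard_image_of_injOn hbij.injOn]
    rw [← this]
    exact indep_le_rk' hind hIY
end dual

theorem rado {β ι : Type*} [Fintype β] [Fintype ι] (N : Matroid β) (A : ι → Set β)
    (h : ∀ J : Finset ι, (J.card : ℕ) ≤ N.rk' (⋃ i ∈ J, A i)) :
    ∃ x : ι → β, (∀ i, x i ∈ A i) ∧ N.Indep (Set.range x) := by
  classical
  suffices H : ∀ (n : ℕ) (A : ι → Set β), (∑ i, (A i).ncard) = n →
      (∀ J : Finset ι, (J.card : ℕ) ≤ N.rk' (⋃ i ∈ J, A i)) →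
      ∃ x : ι → β, (∀ i, x i ∈ A i) ∧ N.Indep (Set.range x) from H _ A rfl h
  intro n
  induction n using Nat.strong_induction_on with
  | _ n IH =>
    intro A hsum h
    by_cases hsmall : ∀ i, (A i).ncard ≤ 1
    · -- base case : each A i is a singleton
      have hone : ∀ i, ∃ a, A i = {a} := by
        intro i
        have h1 : 1 ≤ N.rk' (A i) := by
          have := h {i}
          simpa using this
        have h2 : N.rk' (A i) ≤ (A i).ncard := rk'_le_ncard N (A i)
        exact Set.ncard_eq_one.mp (le_antisymm (hsmall i) (by omega))
      choose a ha using hone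
      refine ⟨a, fun i => by rw [ha i]; rfl, ?_⟩
      have hrange : (⋃ i ∈ (Finset.univ : Finset ι), A i) = Set.range a := by
        ext b
        simp only [Finset.mem_univ, iUnion_true, mem_iUnion, mem_range]
        constructor
        · rintro ⟨i, hib⟩; exact ⟨i, by rw [ha i] at hib; exact hib.symm⟩
        · rintro ⟨i, rfl⟩; exact ⟨i, by rw [ha i]; rfl⟩
      apply indep_of_ncard_le_rk'
      have h1 : (Finset.univ : Finset ι).card ≤ N.rk' (Set.range a) := by
        have := h Finset.univ; rwa [hrange] at this
      have h2 : (Set.range a).ncard ≤ Fintype.card ι := by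
        rw [← Set.image_univ]
        calc (a '' univ).ncard ≤ (univ : Set ι).ncard := ncard_image_le (toFinite _)
        _ = Fintype.card ι := by rw [ncard_univ, Nat.card_eq_fintype_card]
      simp only [Finset.card_univ] at h1
      omega
    · push_neg at hsmall
      obtain ⟨i₀, hi₀⟩ := hsmall
      obtain ⟨x, y, hx, hy, hxy⟩ := (Set.one_lt_ncard_iff (toFinite _)).mp hi₀
      -- try removing x or y from A i₀
      have hsub : ∀ z ∈ A i₀, ∀ i, (Function.update A i₀ (A i₀ \ {z}) i) ⊆ A i := by
        intro z _ i
        rcases eq_or_ne i i₀ with rfl | hne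
        · rw [Function.update_self]; exact diff_subset
        · rw [Function.update_of_ne hne]
      have hlt : ∀ z ∈ A i₀, (∑ i, ((Function.update A i₀ (A i₀ \ {z})) i).ncard) < n := by
        intro z hz
        rw [← hsum]
        apply Finset.sum_lt_sum (fun i _ => ncard_le_ncard (hsub z hz i) (toFinite _))
        exact ⟨i₀, Finset.mem_univ _, by
          rw [Function.update_self]
          exact Set.ncard_diff_singleton_lt_of_mem hz (toFinite _)⟩
      -- if the condition holds for a reduced family, we are done
      have hdone : ∀ z ∈ A i₀,
          (∀ J : Finset ι, (J.card : ℕ) ≤ N.rk' (⋃ i ∈ J, (Function.update A i₀ (A i₀ \ {z})) i)) →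
          ∃ x : ι → β, (∀ i, x i ∈ A i) ∧ N.Indep (Set.range x) := by
        intro z hz hcond
        obtain ⟨x', hx', hind⟩ := IH _ (hlt z hz) _ rfl hcond
        exact ⟨x', fun i => hsub z hz i (hx' i), hind⟩
      by_cases hcx : ∀ J : Finset ι, (J.card : ℕ) ≤ N.rk' (⋃ i ∈ J, (Function.update A i₀ (A i₀ \ {x})) i)
      · exact hdone x hx hcx
      by_cases hcy : ∀ J : Finset ι, (J.card : ℕ) ≤ N.rk' (⋃ i ∈ J, (Function.update A i₀ (A i₀ \ {y})) i)
      · exact hdone y hy hcy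
      exfalso
      push_neg at hcx hcy
      obtain ⟨J₁, hJ₁⟩ := hcx
      obtain ⟨J₂, hJ₂⟩ := hcy
      -- i₀ must be in J₁ and J₂
      have hmem : ∀ (z : β) (J : Finset ι),
          N.rk' (⋃ i ∈ J, (Function.update A i₀ (A i₀ \ {z})) i) < J.card → i₀ ∈ J := by
        intro z J hJ
        by_contra hni
        have : (⋃ i ∈ J, (Function.update A i₀ (A i₀ \ {z})) i) = ⋃ i ∈ J, A i := by
          apply iUnion₂_congr
          intro i hi
          have hne : i ≠ i₀ := fun he => hni (he ▸ hi)
          rw [Function.update_of_ne hne]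
        rw [this] at hJ
        exact absurd (h J) (by omega)
      have hi₁ : i₀ ∈ J₁ := hmem x J₁ hJ₁
      have hi₂ : i₀ ∈ J₂ := hmem y J₂ hJ₂
      set U₁ := ⋃ i ∈ J₁, (Function.update A i₀ (A i₀ \ {x})) i with hU₁
      set U₂ := ⋃ i ∈ J₂, (Function.update A i₀ (A i₀ \ {y})) i with hU₂
      have key1 : (⋃ i ∈ (J₁ ∪ J₂), A i) ⊆ U₁ ∪ U₂ := by
        intro b hb
        simp only [Finset.mem_union, mem_iUnion, exists_prop] at hb
        obtain ⟨i, hi, hbi⟩ := hb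
        rcases eq_or_ne i i₀ with rfl | hne
        · rcases eq_or_ne b x with rfl | hbx
          · right
            simp only [hU₂, mem_iUnion, exists_prop]
            exact ⟨i, hi₂, by rw [Function.update_self]; exact ⟨hbi, by simpa using hxy.symm ∘ Eq.symm⟩⟩
          · left
            simp only [hU₁, mem_iUnion, exists_prop]
            exact ⟨i, hi₁, by rw [Function.update_self]; exact ⟨hbi, by simpa using hbx⟩⟩
        · rcases hi with hi | hi
          · left; simp only [hU₁, mem_iUnion, exists_prop]
            exact ⟨i, hi, by rw [Function.update_of_ne hne]; exact hbi⟩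
          · right; simp only [hU₂, mem_iUnion, exists_prop]
            exact ⟨i, hi, by rw [Function.update_of_ne hne]; exact hbi⟩
      have key2 : (⋃ i ∈ ((J₁ ∩ J₂).erase i₀), A i) ⊆ U₁ ∩ U₂ := by
        intro b hb
        simp only [mem_iUnion, exists_prop, Finset.mem_erase, Finset.mem_inter] at hb
        obtain ⟨i, ⟨hne, hi1, hi2⟩, hbi⟩ := hb
        constructor
        · simp only [hU₁, mem_iUnion, exists_prop]
          exact ⟨i, hi1, by rw [Function.update_of_ne hne]; exact hbi⟩
        · simp only [hU₂, mem_iUnion, exists_prop]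
          exact ⟨i, hi2, by rw [Function.update_of_ne hne]; exact hbi⟩
      have c1 : ((J₁ ∪ J₂).card : ℕ) ≤ N.rk' (U₁ ∪ U₂) := le_trans (h _) (rk'_mono key1)
      have c2 : (((J₁ ∩ J₂).erase i₀).card : ℕ) ≤ N.rk' (U₁ ∩ U₂) := le_trans (h _) (rk'_mono key2)
      have c3 := rk'_submod N U₁ U₂
      have c4 : (J₁ ∪ J₂).card + (J₁ ∩ J₂).card = J₁.card + J₂.card :=
        Finset.card_union_add_card_inter J₁ J₂
      have c5 : ((J₁ ∩ J₂).erase i₀).card + 1 = (J₁ ∩ J₂).card := by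
        rw [Finset.card_erase_add_one (Finset.mem_inter.mpr ⟨hi₁, hi₂⟩)]
      omega

lemma ncard_prod {β γ : Type*} [Fintype β] [Fintype γ] (s : Set β) (t : Set γ) :
    (s ×ˢ t).ncard = s.ncard * t.ncard := by
  rw [← Nat.card_coe_set_eq, ← Nat.card_coe_set_eq, ← Nat.card_coe_set_eq,
    ← Nat.card_prod]
  exact Nat.card_congr (Equiv.Set.prod s t)

theorem matroid_cover {β : Type*} [Fintype β] (N : Matroid β) (k : ℕ)
    (h : ∀ X, X ⊆ N.E → X.ncard ≤ k * N.rk' X) :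
    ∃ I : Fin k → Set β, (∀ j, N.Indep (I j)) ∧ N.E ⊆ ⋃ j, I j := by
  classical
  set NS := Matroid.sum' (fun _ : Fin k => N) with hNS
  haveI : Finite ↥N.E := (toFinite N.E).to_subtype
  haveI : Fintype ↥N.E := Fintype.ofFinite _
  set A : ↥N.E → Set (Fin k × β) := fun e => (univ : Set (Fin k)) ×ˢ {(e : β)} with hA
  have hyp : ∀ J : Finset ↥N.E, (J.card : ℕ) ≤ NS.rk' (⋃ e ∈ J, A e) := by
    intro J
    set X : Set β := Subtype.val '' (J : Set ↥N.E) with hX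
    have hXE : X ⊆ N.E := by rintro b ⟨e, _, rfl⟩; exact e.2
    have hcard : X.ncard = J.card := by
      rw [hX, ncard_image_of_injective _ Subtype.val_injective, ncard_coe_finset]
    obtain ⟨I, hI, hIrk⟩ := exists_basis'_rk' N X
    have hS : NS.Indep ((univ : Set (Fin k)) ×ˢ I) := by
      rw [hNS, Matroid.sum'_indep_iff]
      intro i
      have : (Prod.mk i ⁻¹' ((univ : Set (Fin k)) ×ˢ I)) = I := by
        ext b; simp
      rw [this]; exact hI.indep
    have hSsub : ((univ : Set (Fin k)) ×ˢ I) ⊆ ⋃ e ∈ J, A e := by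
      rintro ⟨j, b⟩ ⟨-, hb⟩
      obtain ⟨e, heJ, rfl⟩ := hI.subset hb
      simp only [mem_iUnion, exists_prop]
      exact ⟨e, heJ, by simp [hA]⟩
    have hcount : ((univ : Set (Fin k)) ×ˢ I).ncard = k * I.ncard := by
      rw [_root_.ncard_prod, ncard_univ, Nat.card_eq_fintype_card, Fintype.card_fin]
    calc (J.card : ℕ) = X.ncard := hcard.symm
    _ ≤ k * N.rk' X := h X hXE
    _ = k * I.ncard := by rw [hIrk]
    _ = ((univ : Set (Fin k)) ×ˢ I).ncard := hcount.symm
    _ ≤ NS.rk' (⋃ e ∈ J, A e) := indep_le_rk' hS hSsub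
  obtain ⟨x, hxA, hxind⟩ := rado NS A hyp
  have hsnd : ∀ e : ↥N.E, (x e).2 = (e : β) := by
    intro e
    have := hxA e
    simp only [hA, mem_prod, mem_univ, mem_singleton_iff, true_and] at this
    exact this
  refine ⟨fun j => Prod.mk j ⁻¹' (Set.range x), fun j => ?_, ?_⟩
  · rw [hNS, Matroid.sum'_indep_iff] at hxind
    exact hxind j
  · intro b hb
    simp only [mem_iUnion, mem_preimage, mem_range]
    refine ⟨(x ⟨b, hb⟩).1, ⟨b, hb⟩, ?_⟩
    have := hsnd ⟨b, hb⟩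
    exact Prod.ext rfl this


open scoped Classical

section counting
variable {α : Type*} [Fintype α]

lemma fiber_sum (p : ℕ) (v : Fin p → Set α) (c : ℝ) :
    (∑ B : Set α, ((Finset.univ.filter fun j => v j = B).card : ℝ) * c) = p * c := by
  rw [← Finset.sum_mul]
  congr 1
  rw [← Nat.cast_sum]
  norm_cast
  rw [← Finset.card_eq_sum_card_fiberwise (f := v) (fun j _ => Finset.mem_univ (v j))]
  simp

lemma fiber_indicator_sum (p : ℕ) (v : Fin p → Set α) (c : ℝ) (e : α) :
    (∑ B : Set α, B.indicator (fun _ ↦ ((Finset.univ.filter fun j => v j = B).card : ℝ) * c) e)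
      = ((Finset.univ.filter fun j => e ∈ v j).card : ℝ) * c := by
  have hcard : (Finset.univ.filter fun j => e ∈ v j).card
      = ∑ B : Set α, ((Finset.univ.filter fun j => e ∈ v j).filter fun j => v j = B).card :=
    Finset.card_eq_sum_card_fiberwise (f := v) (fun j _ => Finset.mem_univ (v j))
  rw [hcard, Nat.cast_sum, Finset.sum_mul]
  apply Finset.sum_congr rfl
  intro B _
  rw [Set.indicator_apply]
  by_cases heB : e ∈ B
  · rw [if_pos heB]
    have hff : ((Finset.univ.filter fun j => e ∈ v j).filter fun j => v j = B)
        = Finset.univ.filter fun j => v j = B := by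
      ext j
      simp only [Finset.mem_filter, Finset.mem_univ, true_and]
      constructor
      · rintro ⟨-, h⟩; exact h
      · rintro rfl; exact ⟨heB, rfl⟩
    rw [hff]
  · rw [if_neg heB]
    have : ((Finset.univ.filter fun j => e ∈ v j).filter fun j => v j = B) = ∅ := by
      apply Finset.filter_false_of_mem
      rintro j hj rfl
      exact heB (Finset.mem_filter.mp hj).2
    rw [this]
    simp

end counting

section easy
variable {α : Type*} [Fintype α] {M : Matroid α}

lemma lam_mul_ncard_eq (lam : Set α → ℝ) (B X : Set α) :
    lam B * ((B ∩ X).ncard : ℝ) = ∑ e ∈ X.toFinset, B.indicator (fun _ ↦ lam B) e := by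
  have h1 : ∀ e ∈ X.toFinset, B.indicator (fun _ ↦ lam B) e = if e ∈ B then lam B else 0 :=
    fun e _ => Set.indicator_apply B _ e
  rw [Finset.sum_congr rfl h1, ← Finset.sum_filter]
  rw [Finset.sum_const]
  have h2 : X.toFinset.filter (· ∈ B) = (B ∩ X).toFinset := by
    ext a
    simp only [Finset.mem_filter, Set.mem_toFinset, Set.mem_inter_iff]
    tauto
  rw [h2, nsmul_eq_mul, ← Set.ncard_eq_toFinset_card', mul_comm]

lemma easy_pack_bound (lam : Set α → ℝ)
    (h0 : ∀ B, 0 ≤ lam B) (hsupp : ∀ B, ¬ M.IsBase B → lam B = 0)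
    (hcon : ∀ e ∈ M.E, (∑ B : Set α, B.indicator (fun _ ↦ lam B) e) ≤ 1)
    {X : Set α} (hX : X ⊆ M.E) (hlt : M.rk' (M.E \ X) < M.rk' M.E) :
    (∑ B : Set α, lam B) ≤ (Nat.card X : ℝ) / ((M.rk' M.E : ℝ) - (M.rk' (M.E \ X) : ℝ)) := by
  set d : ℕ := M.rk' M.E - M.rk' (M.E \ X) with hd
  have hdpos : 0 < d := Nat.sub_pos_of_lt hlt
  have hcast : ((M.rk' M.E : ℝ) - (M.rk' (M.E \ X) : ℝ)) = (d : ℝ) := by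
    rw [hd, Nat.cast_sub hlt.le]
  rw [hcast, le_div_iff₀ (by exact_mod_cast hdpos)]
  have key : ∀ B : Set α, lam B * (d : ℝ) ≤ lam B * ((B ∩ X).ncard : ℝ) := by
    intro B
    by_cases hBb : M.IsBase B
    · apply mul_le_mul_of_nonneg_left _ (h0 B)
      have := base_inter_ncard hBb X
      exact_mod_cast (by omega : d ≤ (B ∩ X).ncard)
    · rw [hsupp B hBb]; simp
  calc (∑ B : Set α, lam B) * (d : ℝ) = ∑ B : Set α, lam B * (d : ℝ) := Finset.sum_mul ..
  _ ≤ ∑ B : Set α, lam B * ((B ∩ X).ncard : ℝ) := Finset.sum_le_sum (fun B _ => key B)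
  _ = ∑ B : Set α, ∑ e ∈ X.toFinset, B.indicator (fun _ ↦ lam B) e :=
      Finset.sum_congr rfl (fun B _ => lam_mul_ncard_eq lam B X)
  _ = ∑ e ∈ X.toFinset, ∑ B : Set α, B.indicator (fun _ ↦ lam B) e := Finset.sum_comm
  _ ≤ ∑ e ∈ X.toFinset, 1 :=
      Finset.sum_le_sum (fun e he => hcon e (hX (Set.mem_toFinset.mp he)))
  _ = (X.toFinset.card : ℝ) := by simp
  _ = (Nat.card X : ℝ) := by rw [Nat.card_coe_set_eq, Set.ncard_eq_toFinset_card']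

lemma easy_cover_bound (kap : Set α → ℝ)
    (h0 : ∀ B, 0 ≤ kap B) (hsupp : ∀ B, ¬ M.IsBase B → kap B = 0)
    (hcon : ∀ e ∈ M.E, 1 ≤ (∑ B : Set α, B.indicator (fun _ ↦ kap B) e))
    {X : Set α} (hX : X ⊆ M.E) (hpos : 0 < M.rk' X) :
    (Nat.card X : ℝ) / (M.rk' X : ℝ) ≤ ∑ B : Set α, kap B := by
  rw [div_le_iff₀ (by exact_mod_cast hpos)]
  have key : ∀ B : Set α, kap B * ((B ∩ X).ncard : ℝ) ≤ kap B * (M.rk' X : ℝ) := by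
    intro B
    by_cases hBb : M.IsBase B
    · apply mul_le_mul_of_nonneg_left _ (h0 B)
      exact_mod_cast indep_le_rk' (hBb.indep.subset inter_subset_left) inter_subset_right
    · rw [hsupp B hBb]; simp
  calc (Nat.card X : ℝ) = (X.toFinset.card : ℝ) := by
        rw [Nat.card_coe_set_eq, Set.ncard_eq_toFinset_card']
  _ = ∑ e ∈ X.toFinset, (1 : ℝ) := by simp
  _ ≤ ∑ e ∈ X.toFinset, ∑ B : Set α, B.indicator (fun _ ↦ kap B) e :=
      Finset.sum_le_sum (fun e he => hcon e (hX (Set.mem_toFinset.mp he)))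
  _ = ∑ B : Set α, ∑ e ∈ X.toFinset, B.indicator (fun _ ↦ kap B) e := Finset.sum_comm
  _ = ∑ B : Set α, kap B * ((B ∩ X).ncard : ℝ) :=
      Finset.sum_congr rfl (fun B _ => (lam_mul_ncard_eq kap B X).symm)
  _ ≤ ∑ B : Set α, kap B * (M.rk' X : ℝ) := Finset.sum_le_sum (fun B _ => key B)
  _ = (∑ B : Set α, kap B) * (M.rk' X : ℝ) := (Finset.sum_mul ..).symm
end easy

theorem cov_mult {α : Type*} [Fintype α] (M : Matroid α) (p q : ℕ)
    (h : ∀ X, X ⊆ M.E → q * X.ncard ≤ p * M.rk' X) :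
    ∃ Bs : Fin p → Set α, (∀ j, M.Indep (Bs j)) ∧
      ∀ e ∈ M.E, q ≤ (Finset.univ.filter fun j => e ∈ Bs j).card := by
  classical
  rcases Nat.eq_zero_or_pos q with rfl | hq
  · exact ⟨fun _ => ∅, fun _ => M.empty_indep, fun _ _ => Nat.zero_le _⟩
  set N₂ := M.comap (Prod.fst : α × Fin q → α) with hN₂
  have hcond : ∀ Y, Y ⊆ N₂.E → Y.ncard ≤ p * N₂.rk' Y := by
    intro Y hY
    set Z := Prod.fst '' Y with hZ
    have hZE : Z ⊆ M.E := by
      rintro b ⟨y, hy, rfl⟩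
      exact hY hy
    have h1 : Y ⊆ Z ×ˢ (univ : Set (Fin q)) := by
      rintro ⟨e, i⟩ hy
      exact ⟨⟨(e,i), hy, rfl⟩, mem_univ _⟩
    have h2 : Y.ncard ≤ q * Z.ncard := by
      calc Y.ncard ≤ (Z ×ˢ (univ : Set (Fin q))).ncard := ncard_le_ncard h1 (toFinite _)
      _ = Z.ncard * q := by rw [_root_.ncard_prod, ncard_univ, Nat.card_eq_fintype_card, Fintype.card_fin]
      _ = q * Z.ncard := mul_comm _ _
    calc Y.ncard ≤ q * Z.ncard := h2
    _ ≤ p * M.rk' Z := h Z hZE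
    _ = p * N₂.rk' Y := by rw [hN₂, rk'_comap]
  obtain ⟨U, hUindep, hUcov⟩ := matroid_cover N₂ p hcond
  refine ⟨fun j => Prod.fst '' U j, fun j => (Matroid.comap_indep_iff.mp (hUindep j)).1, ?_⟩
  intro e he
  have hgr : ∀ i : Fin q, ((e, i) : α × Fin q) ∈ N₂.E := by
    intro i; exact he
  have hex : ∀ i : Fin q, ∃ j, ((e, i) : α × Fin q) ∈ U j := by
    intro i
    have := hUcov (hgr i)
    simpa using this
  choose g hg using hex
  have hginj : Function.Injective g := by
    intro i i' hii
    have h1 := hg i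
    have h2 := hg i'
    rw [hii] at h1
    have hinj := (Matroid.comap_indep_iff.mp (hUindep (g i'))).2
    have := hinj h1 h2 rfl
    exact congrArg Prod.snd this
  calc q = (Finset.univ : Finset (Fin q)).card := by simp
  _ ≤ (Finset.univ.filter fun j => e ∈ Prod.fst '' U j).card := by
      apply Finset.card_le_card_of_injOn g
      · intro i _
        simp only [Finset.coe_filter, Finset.mem_univ, true_and, mem_setOf_eq]
        exact ⟨(e, i), hg i, rfl⟩
      · exact hginj.injOn

theorem pack_mult {α : Type*} [Fintype α] (M : Matroid α) (p q : ℕ) (hq : 0 < q)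
    (h : ∀ X, X ⊆ M.E → p * M.rk' M.E ≤ q * X.ncard + p * M.rk' (M.E \ X)) :
    ∃ Bs : Fin p → Set α, (∀ j, M.IsBase (Bs j)) ∧
      ∀ e, (Finset.univ.filter fun j => e ∈ Bs j).card ≤ q := by
  classical
  haveI : Nonempty (Fin q) := ⟨⟨0, hq⟩⟩
  set N₀ := M.comap (Prod.fst : α × Fin q → α) with hN₀
  have hground : N₀.E = Prod.fst ⁻¹' M.E := rfl
  have hfstsurj : Function.Surjective (Prod.fst : α × Fin q → α) := Prod.fst_surjective
  have hrkE : N₀.rk' N₀.E = M.rk' M.E := by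
    rw [hN₀, Matroid.comap_ground_eq, rk'_comap, Set.image_preimage_eq _ hfstsurj]
  -- apply cov_mult to the dual with multiplicities (p, p-1)
  have hdcond : ∀ Z, Z ⊆ N₀✶.E → (p - 1) * Z.ncard ≤ p * N₀✶.rk' Z := by
    intro Z hZ
    rw [Matroid.dual_ground] at hZ
    have hid := rk'_dual (M := N₀) hZ
    -- claim : p * N₀.rk' N₀.E ≤ Z.ncard + p * N₀.rk' (N₀.E \ Z)
    have hclaim : p * N₀.rk' N₀.E ≤ Z.ncard + p * N₀.rk' (N₀.E \ Z) := by
      set X : Set α := {e ∈ M.E | ∀ i : Fin q, ((e, i) : α × Fin q) ∈ Z} with hX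
      have hXE : X ⊆ M.E := fun e he => he.1
      have h1 : X ×ˢ (univ : Set (Fin q)) ⊆ Z := by
        rintro ⟨e, i⟩ ⟨he, -⟩
        exact he.2 i
      have h2 : q * X.ncard ≤ Z.ncard := by
        calc q * X.ncard = X.ncard * q := mul_comm _ _
        _ = (X ×ˢ (univ : Set (Fin q))).ncard := by
            rw [_root_.ncard_prod, ncard_univ, Nat.card_eq_fintype_card, Fintype.card_fin]
        _ ≤ Z.ncard := ncard_le_ncard h1 (toFinite _)
      have h3 : M.E \ X ⊆ Prod.fst '' (N₀.E \ Z) := by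
        intro e ⟨heE, heX⟩
        rw [hX] at heX
        simp only [mem_setOf_eq, not_and, not_forall] at heX
        obtain ⟨i, hi⟩ := heX heE
        exact ⟨(e, i), ⟨heE, hi⟩, rfl⟩
      have h4 : M.rk' (M.E \ X) ≤ N₀.rk' (N₀.E \ Z) := by
        rw [hN₀, rk'_comap]
        exact rk'_mono h3
      have h5 := h X hXE
      rw [hrkE]
      calc p * M.rk' M.E ≤ q * X.ncard + p * M.rk' (M.E \ X) := h5
      _ ≤ Z.ncard + p * N₀.rk' (N₀.E \ Z) := by
          have := Nat.mul_le_mul_left p h4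
          omega
    -- combine
    have h1 : p * N₀✶.rk' Z + p * N₀.rk' N₀.E = p * Z.ncard + p * N₀.rk' (N₀.E \ Z) := by
      rw [← Nat.left_distrib, ← Nat.left_distrib, hid]
    have h2 : p * Z.ncard ≤ p * N₀✶.rk' Z + Z.ncard := by
      have h3 : p * Z.ncard + p * N₀.rk' (N₀.E \ Z) ≤
          (p * N₀✶.rk' Z + Z.ncard) + p * N₀.rk' (N₀.E \ Z) := by
        calc p * Z.ncard + p * N₀.rk' (N₀.E \ Z)
            = p * N₀✶.rk' Z + p * N₀.rk' N₀.E := h1.symm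
        _ ≤ p * N₀✶.rk' Z + (Z.ncard + p * N₀.rk' (N₀.E \ Z)) :=
            Nat.add_le_add_left hclaim _
        _ = (p * N₀✶.rk' Z + Z.ncard) + p * N₀.rk' (N₀.E \ Z) := by ring
      exact Nat.le_of_add_le_add_right h3
    rw [Nat.sub_mul, one_mul]
    exact Nat.sub_le_iff_le_add.mpr h2
  obtain ⟨Ts, hTind, hTcov⟩ := cov_mult N₀✶ p (p - 1) hdcond
  have hTco : ∀ j, N₀.Coindep (Ts j) := fun j => Matroid.coindep_def.mpr (hTind j)
  have hexB : ∀ j, ∃ B, N₀.IsBase B ∧ B ⊆ N₀.E \ Ts j :=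
    fun j => (hTco j).exists_isBase_subset_compl
  choose B' hB'base hB'sub using hexB
  -- each point of the ground set is in at most one B' j
  have hdisj : ∀ z : α × Fin q, (Finset.univ.filter fun j => z ∈ B' j).card ≤ 1 := by
    intro z
    by_cases hz : z ∈ N₀.E
    · have hcov := hTcov z hz
      have hsub : (Finset.univ.filter fun j => z ∈ B' j) ⊆
          (Finset.univ.filter fun j => z ∉ Ts j) := by
        intro j hj
        simp only [Finset.mem_filter, Finset.mem_univ, true_and] at *
        exact fun hzT => (hB'sub j hj).2 hzT
      have hcards := Finset.card_filter_add_card_filter_not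
        (s := (Finset.univ : Finset (Fin p))) (p := fun j => z ∈ Ts j)
      have := Finset.card_le_card hsub
      simp only [Finset.card_univ, Fintype.card_fin] at hcards
      omega
    · have : (Finset.univ.filter fun j => z ∈ B' j) = ∅ := by
        apply Finset.filter_false_of_mem
        intro j _
        exact fun hzB => hz ((hB'sub j hzB).1)
      rw [this]; simp
  refine ⟨fun j => Prod.fst '' B' j, fun j => ?_, ?_⟩
  · have hindep := (hB'base j).indep
    rw [hN₀, Matroid.comap_indep_iff] at hindep
    apply base_of_indep_rk' hindep.1
    rw [ncard_image_of_injOn hindep.2, ← hrkE, base_ncard (hB'base j)]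
  · intro e
    have hex : ∀ j, j ∈ (Finset.univ.filter fun j => e ∈ Prod.fst '' B' j) →
        ∃ i : Fin q, ((e, i) : α × Fin q) ∈ B' j := by
      intro j hj
      simp only [Finset.mem_filter, Finset.mem_univ, true_and] at hj
      obtain ⟨⟨e', i⟩, hmem, heq⟩ := hj
      exact ⟨i, by rwa [show e' = e from heq] at hmem⟩
    choose g hg using hex
    calc (Finset.univ.filter fun j => e ∈ Prod.fst '' B' j).card
        ≤ (Finset.univ : Finset (Fin q)).card := by
          apply Finset.card_le_card_of_injOn (fun j => if hj : _ then g j hj else Classical.arbitrary _)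
          · intro j hj; exact Finset.mem_univ _
          · intro j hj j' hj' heq
            simp only [Finset.coe_filter, mem_setOf_eq] at hj hj'
            have hj2 : j ∈ (Finset.univ.filter fun j => e ∈ Prod.fst '' B' j) := by
              simpa using hj
            have hj2' : j' ∈ (Finset.univ.filter fun j => e ∈ Prod.fst '' B' j) := by
              simpa using hj'
            dsimp only at heq
            rw [dif_pos hj2, dif_pos hj2'] at heq
            have h1 := hg j hj2
            have h2 := hg j' hj2'
            rw [heq] at h1
            have hle := hdisj (e, g j' hj2')
            rw [Finset.card_le_one] at hle
            exact hle j (Finset.mem_filter.mpr ⟨Finset.mem_univ _, h1⟩)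
              j' (Finset.mem_filter.mpr ⟨Finset.mem_univ _, h2⟩)
    _ = q := by simp

/-- The base packing value equals the strength; the base covering value equals the
fractional arboricity. -/
theorem packing_eq_strength_and_covering_eq_arboricity {α : Type*} [Fintype α]
    (M : Matroid α) (hne : M.E.Nonempty)
    (hloop : M.Loopless') (hrk : 0 < M.rk' M.E) :
    M.packingValue = M.strength ∧ M.coveringValue = M.arboricity := by
  classical
  constructor
  · -- packingValue = strength
    set SS := {s : ℝ | ∃ X, X ⊆ M.E ∧ M.rk' (M.E \ X) < M.rk' M.E ∧
      s = (Nat.card X : ℝ) / ((M.rk' M.E : ℝ) - (M.rk' (M.E \ X) : ℝ))} with hSSdef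
    set PS := {t : ℝ | ∃ lam : Set α → ℝ, (∀ B, 0 ≤ lam B) ∧ (∀ B, ¬ M.IsBase B → lam B = 0) ∧
      (∀ e ∈ M.E, (∑ B : Set α, B.indicator (fun _ ↦ lam B) e) ≤ 1) ∧
      t = ∑ B : Set α, lam B} with hPSdef
    have hSfin : SS.Finite := by
      have hsub : SS ⊆ (fun X : Set α =>
          (Nat.card X : ℝ) / ((M.rk' M.E : ℝ) - (M.rk' (M.E \ X) : ℝ))) '' Set.univ := by
        rintro s ⟨X, -, -, rfl⟩
        exact ⟨X, mem_univ _, rfl⟩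
      exact ((Set.finite_univ).image _).subset hsub
    have hSne : SS.Nonempty := by
      refine ⟨_, M.E, subset_rfl, ?_, rfl⟩
      rw [diff_self, rk'_empty]
      exact hrk
    have hSmem := hSne.csInf_mem hSfin
    obtain ⟨X₀, hX₀E, hX₀lt, hX₀val⟩ := hSmem
    set d₀ : ℕ := M.rk' M.E - M.rk' (M.E \ X₀) with hd₀def
    have hd₀ : 0 < d₀ := Nat.sub_pos_of_lt hX₀lt
    set p : ℕ := X₀.ncard with hpdef
    have hcast₀ : ((M.rk' M.E : ℝ) - (M.rk' (M.E \ X₀) : ℝ)) = (d₀ : ℝ) := by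
      rw [hd₀def, Nat.cast_sub hX₀lt.le]
    have hSval : sInf SS = (p : ℝ) * (d₀ : ℝ)⁻¹ := by
      rw [hX₀val, hcast₀, Nat.card_coe_set_eq, ← hpdef, div_eq_mul_inv]
    -- condition for pack_mult
    have hcond : ∀ X, X ⊆ M.E → p * M.rk' M.E ≤ d₀ * X.ncard + p * M.rk' (M.E \ X) := by
      intro X hXE
      by_cases hlt : M.rk' (M.E \ X) < M.rk' M.E
      · have hmem : (Nat.card X : ℝ) / ((M.rk' M.E : ℝ) - (M.rk' (M.E \ X) : ℝ)) ∈ SS :=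
          ⟨X, hXE, hlt, rfl⟩
        have hle := csInf_le hSfin.bddBelow hmem
        rw [hX₀val] at hle
        set dX : ℕ := M.rk' M.E - M.rk' (M.E \ X) with hdXdef
        have hdX : 0 < dX := Nat.sub_pos_of_lt hlt
        have hcastX : ((M.rk' M.E : ℝ) - (M.rk' (M.E \ X) : ℝ)) = (dX : ℝ) := by
          rw [hdXdef, Nat.cast_sub hlt.le]
        rw [hcast₀, hcastX, Nat.card_coe_set_eq, Nat.card_coe_set_eq, ← hpdef] at hle
        rw [div_le_div_iff₀ (by exact_mod_cast hd₀) (by exact_mod_cast hdX)] at hle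
        have hnat : p * dX ≤ X.ncard * d₀ := by exact_mod_cast hle
        have hsplit : M.rk' M.E = dX + M.rk' (M.E \ X) := by
          rw [hdXdef]; omega
        calc p * M.rk' M.E = p * dX + p * M.rk' (M.E \ X) := by
              rw [hsplit, Nat.mul_add]
        _ ≤ X.ncard * d₀ + p * M.rk' (M.E \ X) := by omega
        _ = d₀ * X.ncard + p * M.rk' (M.E \ X) := by rw [Nat.mul_comm X.ncard d₀]
      · push_neg at hlt
        have : p * M.rk' M.E ≤ p * M.rk' (M.E \ X) := Nat.mul_le_mul_left p hlt
        omega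
    obtain ⟨Bs, hBsbase, hBscnt⟩ := pack_mult M p d₀ hd₀ hcond
    set lam : Set α → ℝ :=
      fun B => ((Finset.univ.filter fun j => Bs j = B).card : ℝ) * (d₀ : ℝ)⁻¹ with hlamdef
    have hlam0 : ∀ B, 0 ≤ lam B := fun B =>
      mul_nonneg (Nat.cast_nonneg _) (inv_nonneg.mpr (Nat.cast_nonneg _))
    have hlamsupp : ∀ B, ¬ M.IsBase B → lam B = 0 := by
      intro B hB
      have hfe : (Finset.univ.filter fun j => Bs j = B) = ∅ := by
        apply Finset.filter_false_of_mem
        rintro j - rfl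
        exact hB (hBsbase j)
      rw [hlamdef]
      simp only [hfe, Finset.card_empty, Nat.cast_zero, zero_mul]
    have hlamcon : ∀ e ∈ M.E, (∑ B : Set α, B.indicator (fun _ ↦ lam B) e) ≤ 1 := by
      intro e _
      rw [hlamdef]
      rw [fiber_indicator_sum p Bs ((d₀ : ℝ)⁻¹) e]
      calc ((Finset.univ.filter fun j => e ∈ Bs j).card : ℝ) * (d₀ : ℝ)⁻¹
          ≤ (d₀ : ℝ) * (d₀ : ℝ)⁻¹ := by
            apply mul_le_mul_of_nonneg_right _ (inv_nonneg.mpr (Nat.cast_nonneg _))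
            exact_mod_cast hBscnt e
      _ = 1 := mul_inv_cancel₀ (by exact_mod_cast hd₀.ne')
    have hlamtot : sInf SS = ∑ B : Set α, lam B := by
      rw [hlamdef, fiber_sum p Bs ((d₀ : ℝ)⁻¹), hSval]
    have hSinP : sInf SS ∈ PS := ⟨lam, hlam0, hlamsupp, hlamcon, hlamtot⟩
    have hub : ∀ t ∈ PS, ∀ s ∈ SS, t ≤ s := by
      rintro t ⟨lam', h0, hsupp, hcon, rfl⟩ s ⟨X, hXE, hlt, rfl⟩
      exact easy_pack_bound lam' h0 hsupp hcon hXE hlt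
    have hPne : PS.Nonempty := ⟨sInf SS, hSinP⟩
    have hPbdd : BddAbove PS := ⟨sInf SS, fun t ht => le_csInf hSne (hub t ht)⟩
    show sSup PS = sInf SS
    apply le_antisymm
    · exact csSup_le hPne (fun t ht => le_csInf hSne (hub t ht))
    · exact le_csSup hPbdd hSinP
  · -- coveringValue = arboricity
    set AS := {s : ℝ | ∃ X, X ⊆ M.E ∧ 0 < M.rk' X ∧
      s = (Nat.card X : ℝ) / (M.rk' X : ℝ)} with hASdef
    set CS := {t : ℝ | ∃ kap : Set α → ℝ, (∀ B, 0 ≤ kap B) ∧ (∀ B, ¬ M.IsBase B → kap B = 0) ∧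
      (∀ e ∈ M.E, 1 ≤ (∑ B : Set α, B.indicator (fun _ ↦ kap B) e)) ∧
      t = ∑ B : Set α, kap B} with hCSdef
    have hAfin : AS.Finite := by
      have hsub : AS ⊆ (fun X : Set α =>
          (Nat.card X : ℝ) / (M.rk' X : ℝ)) '' Set.univ := by
        rintro s ⟨X, -, -, rfl⟩
        exact ⟨X, mem_univ _, rfl⟩
      exact ((Set.finite_univ).image _).subset hsub
    have hAne : AS.Nonempty := ⟨_, M.E, subset_rfl, hrk, rfl⟩
    have hAmem := hAne.csSup_mem hAfin
    obtain ⟨X₁, hX₁E, hX₁pos, hX₁val⟩ := hAmem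
    set q₁ : ℕ := M.rk' X₁ with hq₁def
    set p₁ : ℕ := X₁.ncard with hp₁def
    have hAval : sSup AS = (p₁ : ℝ) * (q₁ : ℝ)⁻¹ := by
      rw [hX₁val, Nat.card_coe_set_eq, ← hp₁def, div_eq_mul_inv]
    have hcond : ∀ X, X ⊆ M.E → q₁ * X.ncard ≤ p₁ * M.rk' X := by
      intro X hXE
      by_cases h0 : M.rk' X = 0
      · have hXempty : X = ∅ := by
          by_contra hXne
          obtain ⟨x, hx⟩ := Set.nonempty_iff_ne_empty.mpr hXne
          have hind : M.Indep {x} := hloop x (hXE hx)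
          have := indep_le_rk' hind (singleton_subset_iff.mpr hx)
          simp only [Set.ncard_singleton, h0] at this
          omega
        rw [hXempty]
        simp
      · have hpos : 0 < M.rk' X := Nat.pos_of_ne_zero h0
        have hmem : (Nat.card X : ℝ) / (M.rk' X : ℝ) ∈ AS := ⟨X, hXE, hpos, rfl⟩
        have hle := le_csSup hAfin.bddAbove hmem
        rw [hX₁val] at hle
        rw [Nat.card_coe_set_eq, Nat.card_coe_set_eq, ← hp₁def] at hle
        rw [div_le_div_iff₀ (by exact_mod_cast hpos) (by exact_mod_cast hX₁pos)] at hle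
        have hnat : X.ncard * q₁ ≤ p₁ * M.rk' X := by exact_mod_cast hle
        calc q₁ * X.ncard = X.ncard * q₁ := Nat.mul_comm _ _
        _ ≤ p₁ * M.rk' X := hnat
    obtain ⟨Is, hIsind, hIscnt⟩ := cov_mult M p₁ q₁ hcond
    have hexB : ∀ j, ∃ B, M.IsBase B ∧ Is j ⊆ B := fun j => (hIsind j).exists_isBase_superset
    choose Bs hBsbase hBssub using hexB
    have hBscnt : ∀ e ∈ M.E, q₁ ≤ (Finset.univ.filter fun j => e ∈ Bs j).card := by
      intro e he
      refine le_trans (hIscnt e he) (Finset.card_le_card ?_)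
      intro j hj
      simp only [Finset.mem_filter, Finset.mem_univ, true_and] at *
      exact hBssub j hj
    set kap : Set α → ℝ :=
      fun B => ((Finset.univ.filter fun j => Bs j = B).card : ℝ) * (q₁ : ℝ)⁻¹ with hkapdef
    have hkap0 : ∀ B, 0 ≤ kap B := fun B =>
      mul_nonneg (Nat.cast_nonneg _) (inv_nonneg.mpr (Nat.cast_nonneg _))
    have hkapsupp : ∀ B, ¬ M.IsBase B → kap B = 0 := by
      intro B hB
      have hfe : (Finset.univ.filter fun j => Bs j = B) = ∅ := by
        apply Finset.filter_false_of_mem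
        rintro j - rfl
        exact hB (hBsbase j)
      rw [hkapdef]
      simp only [hfe, Finset.card_empty, Nat.cast_zero, zero_mul]
    have hkapcon : ∀ e ∈ M.E, 1 ≤ (∑ B : Set α, B.indicator (fun _ ↦ kap B) e) := by
      intro e he
      rw [hkapdef, fiber_indicator_sum p₁ Bs ((q₁ : ℝ)⁻¹) e]
      calc (1 : ℝ) = (q₁ : ℝ) * (q₁ : ℝ)⁻¹ :=
            (mul_inv_cancel₀ (by exact_mod_cast hX₁pos.ne')).symm
      _ ≤ ((Finset.univ.filter fun j => e ∈ Bs j).card : ℝ) * (q₁ : ℝ)⁻¹ := by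
            apply mul_le_mul_of_nonneg_right _ (inv_nonneg.mpr (Nat.cast_nonneg _))
            exact_mod_cast hBscnt e he
    have hkaptot : sSup AS = ∑ B : Set α, kap B := by
      rw [hkapdef, fiber_sum p₁ Bs ((q₁ : ℝ)⁻¹), hAval]
    have hAinC : sSup AS ∈ CS := ⟨kap, hkap0, hkapsupp, hkapcon, hkaptot⟩
    have hlb : ∀ t ∈ CS, ∀ s ∈ AS, s ≤ t := by
      rintro t ⟨kap', h0, hsupp, hcon, rfl⟩ s ⟨X, hXE, hpos, rfl⟩
      exact easy_cover_bound kap' h0 hsupp hcon hXE hpos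
    have hCne : CS.Nonempty := ⟨sSup AS, hAinC⟩
    have hCbdd : BddBelow CS := ⟨sSup AS, fun t ht => csSup_le hAne (fun s hs => hlb t ht s hs)⟩
    show sInf CS = sSup AS
    apply le_antisymm
    · exact csInf_le hCbdd hAinC
    · exact le_csInf hCne (fun t ht => csSup_le hAne (fun s hs => hlb t ht s hs))
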